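/- Let A be a finite-dimensional nilpotent n-Lie superalgebra. Then the Frattini subalgebra F(A), the Frattini ideal φ(A), the Jacobson radical J(A), and the derived subalgebra A^{(1)} = [A,...,A] all coincide. -/

import Mathlib

/-- The sign `(-1)^t` for a parity `t ∈ ℤ/2`, as an element of the field `F`. -/
def superSgn (F : Type*) [Field F] (t : ZMod 2) : F := if t = 0 then 1 else -1

/-- An `n`-Lie superalgebra of parity `α` over a field `F`: a `ℤ/2`-graded vector space `A`
with an `n`-linear bracket which is homogeneous of degree `α`, skew-supersymmetric, and
satisfies the super Filippov–Jacobi identity (every left multiplication operator is a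
superderivation). -/
structure NLieSuper (F : Type*) (A : Type*) [Field F] [AddCommGroup A] [Module F A]
    (n : ℕ) (α : ZMod 2) where
  bracket : MultilinearMap F (fun _ : Fin n => A) A
  grading : ZMod 2 → Submodule F A
  internal : DirectSum.IsInternal grading
  bracket_grade : ∀ (x : Fin n → A) (g : Fin n → ZMod 2),
    (∀ i, x i ∈ grading (g i)) → bracket x ∈ grading (α + ∑ i, g i)
  skew : ∀ (x : Fin n → A) (g : Fin n → ZMod 2), (∀ i, x i ∈ grading (g i)) →
    ∀ i j : Fin n, (i : ℕ) + 1 = (j : ℕ) →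
      bracket (x ∘ Equiv.swap i j) = - (superSgn F (g i * g j)) • bracket x
  jacobi : ∀ (a : Fin n → A) (ga : Fin n → ZMod 2), (∀ l, a l ∈ grading (ga l)) →
    ∀ (b : Fin n → A) (gb : Fin n → ZMod 2), (∀ l, b l ∈ grading (gb l)) →
    ∀ i : Fin n,
      bracket (Function.update a i (bracket b)) =
      ∑ j : Fin n,
        (superSgn F ((∑ l ∈ Finset.univ.erase i, ga l) *
            (α + ∑ l ∈ Finset.univ.filter (fun l => l < j), gb l))) •
          bracket (Function.update b j (bracket (Function.update a i (b j))))

namespace NLieSuper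

variable {F A : Type*} [Field F] [AddCommGroup A] [Module F A] {n : ℕ} {α : ZMod 2}

/-- A graded subspace (`vector superspace`): `S = (S ⊓ A₀) ⊕ (S ⊓ A₁)`. -/
def IsGraded (L : NLieSuper F A n α) (S : Submodule F A) : Prop :=
  S ≤ (S ⊓ L.grading 0) ⊔ (S ⊓ L.grading 1)

/-- A subalgebra: a graded subspace closed under the bracket. -/
def IsSubalgebra (L : NLieSuper F A n α) (S : Submodule F A) : Prop :=
  L.IsGraded S ∧ ∀ x : Fin n → A, (∀ i, x i ∈ S) → L.bracket x ∈ S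

/-- An ideal: a graded subspace `I` with `[A,…,A,I] ⊆ I`. -/
def IsIdeal (L : NLieSuper F A n α) (S : Submodule F A) : Prop :=
  L.IsGraded S ∧ ∀ x : Fin n → A, (∃ i, x i ∈ S) → L.bracket x ∈ S

/-- `[A,…,A,M]`: the span of all brackets with at least one entry in `M`. -/
def amul (L : NLieSuper F A n α) (M : Submodule F A) : Submodule F A :=
  Submodule.span F {z | ∃ x : Fin n → A, (∃ i, x i ∈ M) ∧ z = L.bracket x}

/-- The lower central series: `lcs 0 = A¹ = A`, `lcs s = A^{s+1} = [A,…,A,A^s]`. -/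
def lcs (L : NLieSuper F A n α) : ℕ → Submodule F A
  | 0 => ⊤
  | s + 1 => L.amul (L.lcs s)

/-- `A` is nilpotent if the lower central series reaches `0`. -/
def IsNilpotentAlg (L : NLieSuper F A n α) : Prop := ∃ v, L.lcs v = ⊥

/-- The derived subalgebra `A² = [A,…,A]`. -/
def derived (L : NLieSuper F A n α) : Submodule F A := L.lcs 1

/-- Maximal subalgebras: proper subalgebras maximal among proper subalgebras. -/
def IsMaximalSubalgebra (L : NLieSuper F A n α) (S : Submodule F A) : Prop :=
  L.IsSubalgebra S ∧ S ≠ ⊤ ∧ ∀ T, L.IsSubalgebra T → S < T → T = ⊤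

/-- The Frattini subalgebra: the intersection of all maximal subalgebras. -/
def frattini (L : NLieSuper F A n α) : Submodule F A :=
  sInf {S | L.IsMaximalSubalgebra S}

end NLieSuper

namespace NLieSuper

variable {F A : Type*} [Field F] [AddCommGroup A] [Module F A] {n : ℕ} {α : ZMod 2}

/-- Maximal ideals: proper ideals maximal among proper ideals. -/
def IsMaximalIdeal (L : NLieSuper F A n α) (S : Submodule F A) : Prop :=
  L.IsIdeal S ∧ S ≠ ⊤ ∧ ∀ T, L.IsIdeal T → S < T → T = ⊤

/-- The Jacobson radical: the intersection of all maximal ideals. -/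
def jacobson (L : NLieSuper F A n α) : Submodule F A :=
  sInf {S | L.IsMaximalIdeal S}

/-- The `k`-derived series `A^{(0)} = A`,
`A^{(s+1)} = [A^{(s)},…,A^{(s)} (k times), A,…,A (n-k times)]`. -/
def kDerived (L : NLieSuper F A n α) (k : ℕ) : ℕ → Submodule F A
  | 0 => ⊤
  | s + 1 => Submodule.span F
      {z | ∃ x : Fin n → A,
        (∃ t : Finset (Fin n), t.card = k ∧ ∀ i ∈ t, x i ∈ L.kDerived k s) ∧ z = L.bracket x}

/-- `A` is `k`-solvable if the `k`-derived series reaches `0`. -/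
def IsKSolvable (L : NLieSuper F A n α) (k : ℕ) : Prop := ∃ r, L.kDerived k r = ⊥

end NLieSuper

namespace NLieSuper

variable {F A : Type*} [Field F] [AddCommGroup A] [Module F A] {n : ℕ} {α : ZMod 2}

/-- The Frattini ideal `φ(A)`: the largest ideal of `A` contained in `F(A)`. -/
def phi (L : NLieSuper F A n α) : Submodule F A :=
  sSup {I | L.IsIdeal I ∧ I ≤ L.frattini}

end NLieSuper


namespace NLieSuper

variable {F A : Type*} [Field F] [AddCommGroup A] [Module F A] {n : ℕ} {α : ZMod 2}
  (L : NLieSuper F A n α)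

lemma zmod2_cases : ∀ s : ZMod 2, s = 0 ∨ s = 1 := by decide

lemma isCompl_grading : IsCompl (L.grading 0) (L.grading 1) :=
  L.internal.isCompl (by decide) (by ext t; simp; revert t; decide)

lemma grading_sup_top : L.grading 0 ⊔ L.grading 1 = ⊤ :=
  (isCompl_grading L).sup_eq_top

lemma grading_inf_bot : L.grading 0 ⊓ L.grading 1 = ⊥ :=
  (isCompl_grading L).inf_eq_bot

lemma exists_decomp (t : ZMod 2) (x : A) :
    ∃ y z, y ∈ L.grading t ∧ z ∈ L.grading (t + 1) ∧ x = y + z := by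
  have hx : x ∈ L.grading 0 ⊔ L.grading 1 := by rw [grading_sup_top]; trivial
  rcases Submodule.mem_sup.mp hx with ⟨y, hy, z, hz, hx⟩
  rcases zmod2_cases t with rfl | rfl
  · exact ⟨y, z, hy, hz, hx.symm⟩
  · exact ⟨z, y, hz, by simpa [show (1 + 1 : ZMod 2) = 0 by decide] using hy, by rw [← hx, add_comm]⟩

lemma grading_both_zero {t : ZMod 2} {x : A} (hx : x ∈ L.grading t)
    (hx' : x ∈ L.grading (t + 1)) : x = 0 := by
  have h := grading_inf_bot L
  rcases zmod2_cases t with rfl | rfl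
  · simpa using (Submodule.mem_bot F).mp (h ▸ Submodule.mem_inf.mpr ⟨hx, by simpa using hx'⟩)
  · simpa using (Submodule.mem_bot F).mp
      (h ▸ Submodule.mem_inf.mpr ⟨by simpa [show (1 + 1 : ZMod 2) = 0 by decide] using hx', hx⟩)

lemma bracket_mem_derived [NeZero n] (x : Fin n → A) : L.bracket x ∈ L.derived :=
  Submodule.subset_span ⟨x, ⟨⟨0, trivial⟩, rfl⟩⟩

lemma sup_graded {P Q : Submodule F A} (hP : L.IsGraded P) (hQ : L.IsGraded Q) :
    L.IsGraded (P ⊔ Q) := by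
  intro s hs
  rcases Submodule.mem_sup.mp hs with ⟨p, hp, q, hq, rfl⟩
  rcases Submodule.mem_sup.mp (hP hp) with ⟨p0, hp0, p1, hp1, rfl⟩
  rcases Submodule.mem_sup.mp (hQ hq) with ⟨q0, hq0, q1, hq1, rfl⟩
  have h0 : p0 + q0 ∈ (P ⊔ Q) ⊓ L.grading 0 :=
    ⟨Submodule.add_mem _ (Submodule.mem_sup_left hp0.1) (Submodule.mem_sup_right hq0.1),
      Submodule.add_mem _ hp0.2 hq0.2⟩
  have h1 : p1 + q1 ∈ (P ⊔ Q) ⊓ L.grading 1 :=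
    ⟨Submodule.add_mem _ (Submodule.mem_sup_left hp1.1) (Submodule.mem_sup_right hq1.1),
      Submodule.add_mem _ hp1.2 hq1.2⟩
  have heq : p0 + p1 + (q0 + q1) = (p0 + q0) + (p1 + q1) := by abel
  rw [heq]
  exact Submodule.add_mem _ (Submodule.mem_sup_left h0) (Submodule.mem_sup_right h1)

/-- The derived subalgebra is graded. -/
lemma derived_graded [NeZero n] : L.IsGraded L.derived := by
  set G := (L.derived ⊓ L.grading 0) ⊔ (L.derived ⊓ L.grading 1) with hG
  have key : ∀ x : Fin n → A, L.bracket x ∈ G := by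
    intro x
    choose p q hp hq hpq using fun i => L.exists_decomp 0 (x i)
    have hx : x = q + p := by
      funext i; simp only [Pi.add_apply]; rw [hpq i, add_comm]
    rw [hx, L.bracket.map_add_univ]
    apply Submodule.sum_mem
    intro s _
    have hmem : ∀ i, (s.piecewise q p) i ∈ L.grading (if i ∈ s then (1 : ZMod 2) else 0) := by
      intro i
      by_cases hi : i ∈ s
      · simpa [Finset.piecewise, hi] using (by simpa using hq i)
      · simpa [Finset.piecewise, hi] using hp i
    have hgr := L.bracket_grade _ _ hmem
    have hder := L.bracket_mem_derived (s.piecewise q p)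
    rcases zmod2_cases (α + ∑ i, (if i ∈ s then (1 : ZMod 2) else 0)) with h | h
    · exact Submodule.mem_sup_left ⟨hder, h ▸ hgr⟩
    · exact Submodule.mem_sup_right ⟨hder, h ▸ hgr⟩
  intro z hz
  refine Submodule.span_le.mpr ?_ hz
  rintro z ⟨x, -, rfl⟩
  exact key x

/-- Any graded submodule containing `derived` is an ideal. -/
lemma isIdeal_of_derived_le [NeZero n] {S : Submodule F A} (hg : L.IsGraded S)
    (hd : L.derived ≤ S) : L.IsIdeal S :=
  ⟨hg, fun x _ => hd (L.bracket_mem_derived x)⟩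

/-- Expansion: if `P ⊔ Q = ⊤`, every bracket lies in (span of all-in-`P` brackets) ⊔ `[A…A,Q]`. -/
lemma derived_le_expand {P Q : Submodule F A} (h : P ⊔ Q = ⊤) :
    L.derived ≤ Submodule.span F {z | ∃ x : Fin n → A, (∀ i, x i ∈ P) ∧ z = L.bracket x}
      ⊔ L.amul Q := by
  refine Submodule.span_le.mpr ?_
  rintro z ⟨x, -, rfl⟩
  choose p hp q hq hpq using fun i =>
    Submodule.mem_sup.mp (h ▸ (Submodule.mem_top : x i ∈ ⊤))
  have hx : x = q + p := by
    funext i; simp only [Pi.add_apply]; rw [add_comm, hpq i]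
  rw [hx, L.bracket.map_add_univ]
  apply Submodule.sum_mem
  intro s _
  by_cases hs : s = ∅
  · subst hs
    apply Submodule.mem_sup_left
    apply Submodule.subset_span
    exact ⟨p, fun i => hp i, by simp [Finset.piecewise]⟩
  · rcases Finset.nonempty_iff_ne_empty.mpr hs with ⟨i, hi⟩
    apply Submodule.mem_sup_right
    apply Submodule.subset_span
    refine ⟨s.piecewise q p, ⟨i, ?_⟩, rfl⟩
    simpa [Finset.piecewise, hi] using hq i

/-- Core nilpotency argument. -/
lemma sup_derived_ne_top (hnil : L.IsNilpotentAlg) {M : Submodule F A}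
    (hM : ∀ x : Fin n → A, (∀ i, x i ∈ M) → L.bracket x ∈ M) (hMne : M ≠ ⊤) :
    M ⊔ L.derived ≠ ⊤ := by
  intro htop
  have key : ∀ s, M ⊔ L.lcs s = ⊤ := by
    intro s
    induction s with
    | zero => simp [lcs]
    | succ s ih =>
      have h1 : L.derived ≤ M ⊔ L.lcs (s + 1) := by
        refine le_trans (L.derived_le_expand ih) (sup_le ?_ le_sup_right)
        refine le_trans (Submodule.span_le.mpr ?_) le_sup_left
        rintro z ⟨x, hx, rfl⟩
        exact hM x hx
      have h2 : (⊤ : Submodule F A) ≤ M ⊔ L.lcs (s + 1) := by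
        calc (⊤ : Submodule F A) = M ⊔ L.derived := htop.symm
          _ ≤ M ⊔ (M ⊔ L.lcs (s + 1)) := sup_le_sup_left h1 M
          _ = M ⊔ L.lcs (s + 1) := by rw [← sup_assoc, sup_idem]
      exact top_unique h2
  rcases hnil with ⟨v, hv⟩
  have hfin := key v
  rw [hv, sup_bot_eq] at hfin
  exact hMne hfin

/-- Construction of a graded maximal hyperplane containing `derived` and avoiding `x`. -/
lemma exists_hyperplane [NeZero n] {x : A} (hx : x ∉ L.derived) :
    ∃ H : Submodule F A, L.derived ≤ H ∧ x ∉ H ∧ L.IsGraded H ∧ H ≠ ⊤ ∧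
      ∀ T : Submodule F A, H < T → T = ⊤ := by
  obtain ⟨t, xt, xo, hxt, hxo, hxdec, hxtd⟩ :
      ∃ (t : ZMod 2) (xt xo : A), xt ∈ L.grading t ∧ xo ∈ L.grading (t + 1) ∧
        x = xt + xo ∧ xt ∉ L.derived := by
    rcases L.exists_decomp 0 x with ⟨y, z, hy, hz, hdec⟩
    by_cases hyd : y ∈ L.derived
    · refine ⟨1, z, y, by simpa using hz, by simpa [show (1 + 1 : ZMod 2) = 0 by decide] using hy, by rw [hdec, add_comm], ?_⟩
      intro hzd
      exact hx (hdec ▸ Submodule.add_mem _ hyd hzd)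
    · exact ⟨0, y, z, hy, by simpa using hz, hdec, hyd⟩
  set W := L.derived ⊔ L.grading (t + 1) with hW
  have hxtW : xt ∉ W := by
    intro hmem
    rcases Submodule.mem_sup.mp hmem with ⟨d, hd, y', hy', hdy⟩
    rcases Submodule.mem_sup.mp (L.derived_graded hd) with ⟨d0, hd0, d1, hd1, hdd⟩
    obtain ⟨dt, dP, hdt, hdP, hdd'⟩ :
        ∃ dt dP, (dt ∈ L.derived ∧ dt ∈ L.grading t) ∧
          (dP ∈ L.derived ∧ dP ∈ L.grading (t + 1)) ∧ d = dt + dP := by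
      rcases zmod2_cases t with rfl | rfl
      · exact ⟨d0, d1, ⟨hd0.1, hd0.2⟩, ⟨hd1.1, by simpa using hd1.2⟩, hdd.symm⟩
      · exact ⟨d1, d0, ⟨hd1.1, hd1.2⟩, ⟨hd0.1, by simpa [show (1 + 1 : ZMod 2) = 0 by decide] using hd0.2⟩, by rw [← hdd, add_comm]⟩
    have hdiff : xt - dt ∈ L.grading t := Submodule.sub_mem _ hxt hdt.2
    have hdiff' : xt - dt ∈ L.grading (t + 1) := by
      have heq : xt - dt = dP + y' := by rw [← hdy, hdd']; abel
      rw [heq]; exact Submodule.add_mem _ hdP.2 hy'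
    have h0 := L.grading_both_zero hdiff hdiff'
    have hxteq : xt = dt := by linear_combination (norm := abel) h0
    exact hxtd (hxteq ▸ hdt.1)
  have hq : W.mkQ xt ≠ 0 := by
    intro h0
    exact hxtW (by simpa [Submodule.Quotient.mk_eq_zero] using h0)
  obtain ⟨g, hg⟩ : ∃ g : Module.Dual F (A ⧸ W), g (W.mkQ xt) ≠ 0 := by
    by_contra hc
    push_neg at hc
    exact hq ((Module.forall_dual_apply_eq_zero_iff F _).mp hc)
  set f : A →ₗ[F] F := g.comp W.mkQ with hf
  have hWker : W ≤ LinearMap.ker f := by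
    intro w hw
    simp [hf, LinearMap.mem_ker, (Submodule.Quotient.mk_eq_zero W).mpr hw]
  have hxtH : xt ∉ LinearMap.ker f := by
    simpa [hf, LinearMap.mem_ker] using hg
  have hder : L.derived ≤ LinearMap.ker f := le_trans le_sup_left hWker
  have hoH : ∀ {a : A}, a ∈ L.grading (t + 1) → a ∈ LinearMap.ker f := fun ha =>
    hWker (Submodule.mem_sup_right ha)
  refine ⟨LinearMap.ker f, hder, ?_, ?_, ?_, ?_⟩
  · intro hxH
    apply hxtH
    have heq : xt = x - xo := by rw [hxdec]; abel
    rw [heq]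
    exact Submodule.sub_mem _ hxH (hoH hxo)
  · intro h hh
    rcases L.exists_decomp t h with ⟨ht', ho, hht, hho, rfl⟩
    have hhoH : ho ∈ LinearMap.ker f := hoH hho
    have hhtH : ht' ∈ LinearMap.ker f := by
      have heq : ht' = (ht' + ho) - ho := by abel
      rw [heq]; exact Submodule.sub_mem _ hh hhoH
    rcases zmod2_cases t with rfl | rfl
    · exact Submodule.add_mem _ (Submodule.mem_sup_left ⟨hhtH, hht⟩)
        (Submodule.mem_sup_right ⟨hhoH, by simpa using hho⟩)
    · rw [add_comm]
      exact Submodule.add_mem _ (Submodule.mem_sup_left ⟨hhoH, by simpa [show (1 + 1 : ZMod 2) = 0 by decide] using hho⟩)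
        (Submodule.mem_sup_right ⟨hhtH, hht⟩)
  · intro htop
    exact hxtH (htop ▸ Submodule.mem_top)
  · intro T hT
    obtain ⟨y, hyT, hyH⟩ := SetLike.exists_of_lt hT
    have hy0 : f y ≠ 0 := fun h0 => hyH (LinearMap.mem_ker.mpr h0)
    rw [Submodule.eq_top_iff']
    intro a
    have hmem : a - (f a / f y) • y ∈ LinearMap.ker f := by
      rw [LinearMap.mem_ker, map_sub, map_smul, smul_eq_mul, div_mul_cancel₀ _ hy0, sub_self]
    have h1 : a - (f a / f y) • y ∈ T := hT.le hmem
    have h2 : (f a / f y) • y ∈ T := Submodule.smul_mem _ _ hyT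
    have heq : a = (a - (f a / f y) • y) + (f a / f y) • y := by abel
    rw [heq]
    exact Submodule.add_mem _ h1 h2

end NLieSuper

/-- For a finite-dimensional nilpotent `n`-Lie superalgebra, the Frattini subalgebra, the
Frattini ideal, the Jacobson radical and the derived subalgebra all coincide:
`F(A) = φ(A) = J(A) = A^{(1)}`. -/
theorem frattini_eq_phi_eq_jacobson_eq_derived {F A : Type*} [Field F] [AddCommGroup A]
    [Module F A] [FiniteDimensional F A] {n : ℕ} (hn : 2 ≤ n) {α : ZMod 2}
    (L : NLieSuper F A n α) (hnil : L.IsNilpotentAlg) :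
    L.frattini = L.derived ∧ L.phi = L.derived ∧ L.jacobson = L.derived :=  by
  have : NeZero n := ⟨by omega⟩
  have hderiv_le_max : ∀ M : Submodule F A,
      (∀ x : Fin n → A, (∀ i, x i ∈ M) → L.bracket x ∈ M) → L.IsGraded M → M ≠ ⊤ →
      (∀ T, L.IsGraded T → (L.derived ≤ T) → M < T → T = ⊤) → L.derived ≤ M := by
    intro M hMb hMg hMne hMmax
    by_contra hDM
    have hgr : L.IsGraded (M ⊔ L.derived) := L.sup_graded hMg L.derived_graded
    have hlt : M < M ⊔ L.derived := by
      rcases lt_or_eq_of_le (le_sup_left : M ≤ M ⊔ L.derived) with h | h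
      · exact h
      · exact absurd (le_trans le_sup_right h.ge) hDM
    have htop : M ⊔ L.derived = ⊤ := hMmax _ hgr le_sup_right hlt
    exact L.sup_derived_ne_top hnil hMb hMne htop
  have hfr_ge : L.derived ≤ L.frattini := by
    refine le_sInf ?_
    rintro M ⟨⟨hMg, hMb⟩, hMne, hMmax⟩
    refine hderiv_le_max M hMb hMg hMne ?_
    intro T hTg hTd hlt
    exact hMmax T ⟨hTg, fun x _ => hTd (L.bracket_mem_derived x)⟩ hlt
  have hja_ge : L.derived ≤ L.jacobson := by
    refine le_sInf ?_
    rintro M ⟨⟨hMg, hMb⟩, hMne, hMmax⟩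
    have hMb' : ∀ x : Fin n → A, (∀ i, x i ∈ M) → L.bracket x ∈ M := by
      intro x hx
      exact hMb x ⟨⟨0, by omega⟩, hx ⟨0, by omega⟩⟩
    refine hderiv_le_max M hMb' hMg hMne ?_
    intro T hTg hTd hlt
    exact hMmax T ⟨hTg, fun x _ => hTd (L.bracket_mem_derived x)⟩ hlt
  have hfr_le : L.frattini ≤ L.derived := by
    intro x hxF
    by_contra hxD
    obtain ⟨H, hHd, hxH, hHg, hHne, hHmax⟩ := L.exists_hyperplane hxD
    have hHmaxsub : L.IsMaximalSubalgebra H :=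
      ⟨⟨hHg, fun y _ => hHd (L.bracket_mem_derived y)⟩, hHne, fun T _ hlt => hHmax T hlt⟩
    exact hxH (Submodule.mem_sInf.mp hxF H hHmaxsub)
  have hja_le : L.jacobson ≤ L.derived := by
    intro x hxF
    by_contra hxD
    obtain ⟨H, hHd, hxH, hHg, hHne, hHmax⟩ := L.exists_hyperplane hxD
    have hHmaxid : L.IsMaximalIdeal H :=
      ⟨⟨hHg, fun y _ => hHd (L.bracket_mem_derived y)⟩, hHne, fun T _ hlt => hHmax T hlt⟩
    exact hxH (Submodule.mem_sInf.mp hxF H hHmaxid)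
  have hfr : L.frattini = L.derived := le_antisymm hfr_le hfr_ge
  refine ⟨hfr, ?_, le_antisymm hja_le hja_ge⟩
  apply le_antisymm
  · exact sSup_le fun I hI => le_trans hI.2 hfr_le
  · exact le_sSup ⟨L.isIdeal_of_derived_le L.derived_graded le_rfl, hfr_ge⟩
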